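/- arXiv:0802.1088 — 8 statements merged into one kernel-verified Lean document; each statement's English description precedes it below -/
import Mathlib

section
/- Let G be a finite group, H a normal subgroup of G, and let N̄ be a nilpotent subgroup of the quotient group G/H. Then there exists a nilpotent subgroup N of G whose image under the canonical projection G → G/H equals N̄. -/
open Subgroup

/-- If `G` is finite, `H ≤ Φ(G)` is normal and `G ⧸ H` is nilpotent, then `G` is nilpotent. -/
lemma aux_nilpotent_of_quotient_frattini {G : Type*} [Group G] [Finite G] (H : Subgroup G)
    [H.Normal] (hH : H ≤ frattini G) (hq : Group.IsNilpotent (G ⧸ H)) :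
    Group.IsNilpotent G := by
  have q := (isNilpotent_of_finite_tfae (G := G)).out 0 3
  rw [q]; clear q
  intro p hp P
  have hf : Function.Surjective (QuotientGroup.mk' H) := QuotientGroup.mk'_surjective H
  -- the image of `P` in `G ⧸ H` is a Sylow subgroup, normal since the quotient is nilpotent
  have hPbar : ((P.mapSurjective hf : Sylow p (G ⧸ H)) : Subgroup (G ⧸ H)).Normal := by
    have q := (isNilpotent_of_finite_tfae (G := G ⧸ H)).out 0 3
    rw [q] at hq
    exact hq p hp _
  rw [Sylow.coe_mapSurjective] at hPbar
  -- so `K = P ⊔ H` is normal in `G`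
  have hK : (((P : Subgroup G).map (QuotientGroup.mk' H)).comap (QuotientGroup.mk' H))
      = (P : Subgroup G) ⊔ H := by
    rw [Subgroup.comap_map_eq, QuotientGroup.ker_mk']
  have hKnormal : ((P : Subgroup G) ⊔ H).Normal := hK ▸ hPbar.comap _
  -- Frattini's argument
  have htop := Sylow.normalizer_sup_eq_top' (N := (P : Subgroup G) ⊔ H) P le_sup_left
  have htop2 : normalizer ((P : Subgroup G) : Set G) ⊔ frattini G = ⊤ := by
    rw [eq_top_iff, ← htop]
    refine sup_le ?_ (sup_le ?_ ?_)
    · exact le_sup_left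
    · exact le_trans le_normalizer le_sup_left
    · exact le_trans hH le_sup_right
  exact Subgroup.normalizer_eq_top_iff.mp (frattini_nongenerating htop2)

/-- Every nilpotent subgroup of a quotient of a finite group lifts to a nilpotent subgroup. -/
theorem nilpotent_subgroup_of_quotient_lifts {G : Type*} [Group G] [Finite G]
    (H : Subgroup G) [H.Normal] (Nbar : Subgroup (G ⧸ H))
    (hN : Group.IsNilpotent Nbar) :
    ∃ N : Subgroup G, Group.IsNilpotent N ∧ N.map (QuotientGroup.mk' H) = Nbar := by
  -- the set of subgroups of `G` mapping onto `Nbar`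
  set S : Set (Subgroup G) := {N | N.map (QuotientGroup.mk' H) = Nbar} with hS
  have hSne : S.Nonempty := by
    refine ⟨Nbar.comap (QuotientGroup.mk' H), ?_⟩
    simp [hS, Subgroup.map_comap_eq_self_of_surjective (QuotientGroup.mk'_surjective H)]
  -- choose `N` minimal in `S`
  have hwf : WellFoundedLT (Subgroup G) := Finite.to_wellFoundedLT
  obtain ⟨N, hNS, hNmin⟩ := (IsWellFounded.wf (r := ((· < ·) : Subgroup G → Subgroup G → Prop))).has_min S hSne
  refine ⟨N, ?_, hNS⟩
  -- consider the restriction of the quotient map to `N`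
  set φ : N →* G ⧸ H := (QuotientGroup.mk' H).comp N.subtype with hφ
  have hrange : φ.range = Nbar := by
    rw [hφ, MonoidHom.range_comp, Subgroup.range_subtype]
    exact hNS
  -- the kernel of `φ` is contained in the Frattini subgroup of `N`
  have hker : φ.ker ≤ frattini N := by
    by_contra hcon
    rw [frattini, Order.radical, le_iInf₂_iff] at hcon
    push_neg at hcon
    obtain ⟨M, hM, hkerM⟩ := hcon
    have hsup : M ⊔ φ.ker = ⊤ := by
      refine hM.2 _ (lt_of_le_of_ne le_sup_left fun h => hkerM ?_)
      rw [h]; exact le_sup_right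
    -- then the image of `M` in `G` also maps onto `Nbar`, contradicting minimality
    have hM'S : M.map N.subtype ∈ S := by
      rw [hS, Set.mem_setOf_eq]
      apply le_antisymm
      · rw [← hNS]
        exact Subgroup.map_mono (Subgroup.map_subtype_le M)
      · intro x hx
        rw [← hNS, Subgroup.mem_map] at hx
        obtain ⟨n, hn, rfl⟩ := hx
        have hmem : (⟨n, hn⟩ : N) ∈ M ⊔ φ.ker := hsup ▸ Subgroup.mem_top _
        rw [← SetLike.mem_coe, Subgroup.mul_normal] at hmem
        obtain ⟨m, hm, k, hk, hmk⟩ := hmem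
        have : QuotientGroup.mk' H n = φ m := by
          have h1 : φ (⟨n, hn⟩ : N) = φ m * φ k := by
            rw [← map_mul]; exact congrArg φ hmk.symm
          have hk' : φ k = 1 := hk
          rw [hk', mul_one] at h1; exact h1
        rw [this]
        exact ⟨(m : G), Subgroup.mem_map_of_mem _ hm, rfl⟩
    have hlt : M.map N.subtype < N := by
      refine lt_of_le_of_ne (Subgroup.map_subtype_le M) fun h => hM.1 ?_
      rw [eq_top_iff]
      intro x _
      have hx : (x : G) ∈ M.map N.subtype := by rw [h]; exact x.2
      obtain ⟨m, hm, hmx⟩ := hx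
      rwa [show m = x from Subtype.ext hmx] at hm
    exact hNmin _ hM'S hlt
  -- `N ⧸ ker φ ≅ Nbar` is nilpotent
  have hqnil : Group.IsNilpotent (N ⧸ φ.ker) := by
    have hNbar : Group.IsNilpotent φ.range := by rw [hrange]; exact hN
    exact nilpotent_of_surjective (G := φ.range)
      (QuotientGroup.quotientKerEquivRange φ).symm.toMonoidHom
      (QuotientGroup.quotientKerEquivRange φ).symm.surjective
  exact aux_nilpotent_of_quotient_frattini φ.ker hker hqnil
end

section
/- Let G be a finite group, Q a Sylow 2-subgroup of G, and x an element of odd order in the normalizer N_G(Q). Suppose there exist normal subgroups G₁, …, G_k of G such that G₁ ∩ … ∩ G_k ∩ Q is contained in the center of N_G(Q), and such that for every i and every u ∈ Q the commutator x⁻¹u⁻¹xu lies in G_i. Then x centralizes Q, i.e., xu = ux for all u ∈ Q. -/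
/-- If `x` is an element of odd order normalizing a Sylow `2`-subgroup `Q` of a finite group `G`,
and there are normal subgroups `G₁, …, G_k` of `G` such that `G₁ ∩ … ∩ G_k ∩ Q` lies in the
center of `N_G(Q)` and `x` centralizes `Q` modulo each `G i`, then `x` centralizes `Q`. -/
theorem centralizes_sylow_two_of_centralizes_mod_normals {G : Type*} [Group G] [Finite G]
    (Q : Sylow 2 G) (x : G) (hx : x ∈ Subgroup.normalizer ((Q : Subgroup G) : Set G)) (hodd : Odd (orderOf x))
    (k : ℕ) (Gs : Fin k → Subgroup G) (hnorm : ∀ i, (Gs i).Normal)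
    (hcenter : (⨅ i, Gs i) ⊓ (Q : Subgroup G) ≤
      Subgroup.centralizer ((Subgroup.normalizer ((Q : Subgroup G) : Set G) : Subgroup G) : Set G))
    (hcomm : ∀ i, ∀ u ∈ (Q : Subgroup G), x⁻¹ * u⁻¹ * x * u ∈ Gs i) :
    ∀ u ∈ (Q : Subgroup G), x * u = u * x := by
  intro u hu
  set c : G := x⁻¹ * u⁻¹ * x * u with hc
  -- c ∈ Q
  have hxinv : x⁻¹ ∈ Subgroup.normalizer ((Q : Subgroup G) : Set G) := inv_mem hx
  have hcQ : c ∈ (Q : Subgroup G) := by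
    have h1 : x⁻¹ * u⁻¹ * x ∈ (Q : Subgroup G) := by
      have := (Subgroup.mem_normalizer_iff.mp hxinv) u⁻¹ |>.mp (inv_mem hu)
      simpa [mul_assoc] using this
    simpa [hc, mul_assoc] using mul_mem h1 hu
  have hcG : c ∈ ⨅ i, Gs i := Subgroup.mem_iInf.mpr fun i => hcomm i u hu
  have hcent : c ∈ Subgroup.centralizer ((Subgroup.normalizer ((Q : Subgroup G) : Set G) : Subgroup G) : Set G) :=
    hcenter ⟨hcG, hcQ⟩
  have hcx : Commute x c := Subgroup.mem_centralizer_iff.mp hcent x hx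
  -- conjugate of x by u
  have hconj : u⁻¹ * x * u = x * c := by
    simp [hc, mul_assoc]
  have hn : (x * c) ^ orderOf x = 1 := by
    rw [← hconj]
    have : (u⁻¹ * x * u) ^ orderOf x = u⁻¹ * x ^ orderOf x * u := by
      have := conj_pow (a := u⁻¹) (b := x) (i := orderOf x)
      simpa [inv_inv] using this
    rw [this, pow_orderOf_eq_one, mul_one, inv_mul_cancel]
  have hcn : c ^ orderOf x = 1 := by
    have := hcx.mul_pow (orderOf x)
    rw [this, pow_orderOf_eq_one, one_mul] at hn
    exact hn
  -- c has 2-power order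
  obtain ⟨m, hm⟩ := Q.isPGroup' ⟨c, hcQ⟩
  have hm' : c ^ (2 : ℕ) ^ m = 1 := by
    have := congrArg (Subtype.val) hm
    simpa using this
  have hd1 : orderOf c ∣ 2 ^ m := orderOf_dvd_of_pow_eq_one hm'
  have hd2 : orderOf c ∣ orderOf x := orderOf_dvd_of_pow_eq_one hcn
  have hcop : Nat.Coprime (2 ^ m) (orderOf x) :=
    Nat.Coprime.pow_left m (Nat.coprime_two_left.mpr hodd)
  have h1 : orderOf c = 1 := Nat.eq_one_of_dvd_coprimes hcop hd1 hd2
  have hce : c = 1 := orderOf_eq_one_iff.mp h1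
  have hxu : u⁻¹ * x * u = x := by rw [hconj, hce, mul_one]
  calc x * u = u * (u⁻¹ * x * u) := by simp [mul_assoc]
    _ = u * x := by rw [hxu]
end

section
/- Let G be a finite group and H a subgroup of G such that the index of H in G is a power of 2 and every element of odd order of G lies in H. If for every Sylow 2-subgroup Q₀ of H one has N_H(Q₀) = Q₀·C_H(Q₀), then for every Sylow 2-subgroup Q of G one has N_G(Q) = Q·C_G(Q). -/
open Subgroup

private lemma aux_odd_eq_one {n k : ℕ} (hn : Odd n) (hd : n ∣ 2 ^ k) : n = 1 :=
  ((Nat.coprime_two_right.mpr hn).pow_right k).eq_one_of_dvd hd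

/-- Any element normalizing `S` normalizes the centralizer of `S`. -/
private lemma aux_normalizer_le {X : Type*} [Group X] (S : Subgroup X) :
    Subgroup.normalizer (S : Set X) ≤ Subgroup.normalizer (Subgroup.centralizer (S : Set X) : Set X) := by
  intro n hn
  rw [mem_normalizer_iff] at hn ⊢
  intro c
  constructor
  · intro hc
    rw [mem_centralizer_iff] at hc ⊢
    intro s hs
    have hs' : n⁻¹ * s * n ∈ S := by
      have h := (hn (n⁻¹ * s * n)).mpr
      have h2 : n * (n⁻¹ * s * n) * n⁻¹ = s := by group
      rw [h2] at h
      exact h hs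
    have hcs := hc _ hs'
    calc s * (n * c * n⁻¹) = n * ((n⁻¹ * s * n) * c) * n⁻¹ := by group
      _ = n * (c * (n⁻¹ * s * n)) * n⁻¹ := by rw [hcs]
      _ = n * c * n⁻¹ * s := by group
  · intro hc
    rw [mem_centralizer_iff] at hc ⊢
    intro s hs
    have hs' : n * s * n⁻¹ ∈ S := (hn s).mp hs
    have hcs := hc _ hs'
    have h2 : n * (s * c) * n⁻¹ = n * (c * s) * n⁻¹ := by
      calc n * (s * c) * n⁻¹ = (n * s * n⁻¹) * (n * c * n⁻¹) := by group
        _ = (n * c * n⁻¹) * (n * s * n⁻¹) := hcs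
        _ = n * (c * s) * n⁻¹ := by group
    exact mul_left_cancel (mul_right_cancel h2)

/-- An element of odd order in `S ⊔ C_X(S)`, with `S` a `2`-group, centralizes `S`. -/
private lemma aux_odd_mem_centralizer {X : Type*} [Group X] (S : Subgroup X)
    (hS : IsPGroup 2 S) {g : X} (hg : Odd (orderOf g))
    (hmem : g ∈ S ⊔ Subgroup.centralizer (S : Set X)) :
    g ∈ Subgroup.centralizer (S : Set X) := by
  set C := Subgroup.centralizer (S : Set X) with hC
  set J := S ⊔ C with hJ
  have hSJ : S ≤ J := le_sup_left
  have hCJ : C ≤ J := le_sup_right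
  have hJn : J ≤ Subgroup.normalizer (C : Set X) :=
    sup_le (le_trans le_normalizer (aux_normalizer_le S)) le_normalizer
  haveI hnormal : (C.subgroupOf J).Normal := by
    constructor
    intro c hc j
    rw [mem_subgroupOf] at hc ⊢
    have hjn := hJn j.2
    rw [mem_normalizer_iff] at hjn
    have := (hjn (c : X)).mp hc
    simpa using this
  have hmap : Subgroup.map (QuotientGroup.mk' (C.subgroupOf J)) (S.subgroupOf J) = ⊤ := by
    have h1 : (⊤ : Subgroup J) = S.subgroupOf J ⊔ C.subgroupOf J := by
      rw [← subgroupOf_sup hSJ hCJ]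
      exact (subgroupOf_self J).symm
    have h2 := Subgroup.map_top_of_surjective (QuotientGroup.mk' (C.subgroupOf J))
      (QuotientGroup.mk'_surjective _)
    rw [h1, Subgroup.map_sup, QuotientGroup.map_mk'_self, sup_bot_eq] at h2
    exact h2
  have hS' : IsPGroup 2 (S.subgroupOf J) :=
    hS.of_equiv (subgroupOfEquivOfLe hSJ).symm
  have hQt : IsPGroup 2 (J ⧸ C.subgroupOf J) := by
    have h2 := hS'.map (QuotientGroup.mk' (C.subgroupOf J))
    rw [hmap] at h2
    exact h2.of_equiv Subgroup.topEquiv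
  set gJ : J := ⟨g, hmem⟩ with hgJ
  have hog : orderOf gJ = orderOf g := by
    have := orderOf_injective J.subtype Subtype.coe_injective gJ
    exact Subgroup.orderOf_mk g hmem
  set q := QuotientGroup.mk' (C.subgroupOf J) gJ with hq
  have hq1 : orderOf q ∣ orderOf gJ := orderOf_map_dvd _ _
  obtain ⟨k, hk⟩ := hQt q
  have hq2 : orderOf q ∣ 2 ^ k := orderOf_dvd_of_pow_eq_one hk
  have hqodd : Odd (orderOf q) := Odd.of_dvd_nat (hog ▸ hg) hq1
  have hq0 : q = 1 := orderOf_eq_one_iff.mp (aux_odd_eq_one hqodd hq2)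
  have hmem' : gJ ∈ C.subgroupOf J := by
    rwa [← QuotientGroup.ker_mk' (C.subgroupOf J), MonoidHom.mem_ker]
  rwa [mem_subgroupOf] at hmem'

/-- 2-part / odd-part decomposition of an element of a finite group. -/
private lemma aux_decomp {X : Type*} [Group X] [Finite X] (g : X) :
    ∃ u v : X, g = u * v ∧ u ∈ Subgroup.zpowers g ∧ v ∈ Subgroup.zpowers g ∧
      (∃ a : ℕ, u ^ (2 ^ a) = 1) ∧ Odd (orderOf v) := by
  set o := orderOf g with ho
  have ho0 : o ≠ 0 := (orderOf_pos g).ne'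
  set a := o.factorization 2 with ha
  set b := o / 2 ^ a with hb
  have hob : 2 ^ a * b = o := Nat.ordProj_mul_ordCompl_eq_self o 2
  have hnd : ¬ 2 ∣ b := Nat.not_dvd_ordCompl Nat.prime_two ho0
  have hbodd : Odd b := Nat.odd_iff.mpr (Nat.two_dvd_ne_zero.mp hnd)
  have hcop : Nat.Coprime (2 ^ a) b :=
    (Nat.coprime_ordCompl Nat.prime_two ho0).pow_left a
  have hg1 : Nat.gcd (2 ^ a) b = 1 := hcop
  have hbez := Nat.gcd_eq_gcd_ab (2 ^ a) b
  rw [hg1] at hbez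
  set s := Nat.gcdA (2 ^ a) b with hs
  set t := Nat.gcdB (2 ^ a) b with ht
  have hoz : (o : ℤ) = (2 : ℤ) ^ a * (b : ℤ) := by exact_mod_cast hob.symm
  have hgo : g ^ (o : ℤ) = 1 := by rw [zpow_natCast]; exact pow_orderOf_eq_one g
  refine ⟨g ^ ((b : ℤ) * t), g ^ ((2 : ℤ) ^ a * s), ?_, ⟨(b : ℤ) * t, rfl⟩,
    ⟨(2 : ℤ) ^ a * s, rfl⟩, ⟨a, ?_⟩, ?_⟩
  · have h1 : (b : ℤ) * t + (2 : ℤ) ^ a * s = 1 := by push_cast at hbez ⊢; linarith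
    rw [← zpow_add, h1, zpow_one]
  · rw [← zpow_natCast, ← zpow_mul]
    have h2 : (b : ℤ) * t * ((2 ^ a : ℕ) : ℤ) = (o : ℤ) * t := by push_cast [hoz]; ring
    rw [h2, zpow_mul, hgo, one_zpow]
  · have hvb : (g ^ ((2 : ℤ) ^ a * s)) ^ (b : ℕ) = 1 := by
      rw [← zpow_natCast, ← zpow_mul]
      have h3 : (2 : ℤ) ^ a * s * ((b : ℕ) : ℤ) = (o : ℤ) * s := by push_cast [hoz]; ring
      rw [h3, zpow_mul, hgo, one_zpow]
    exact Odd.of_dvd_nat hbodd (orderOf_dvd_of_pow_eq_one hvb)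

/-- If `H` is a subgroup of `2`-power index in a finite group `G` containing all elements of odd
order, and `H` satisfies (ESyl2), then so does `G`. -/
theorem esyl2_of_two_power_index_subgroup {G : Type*} [Group G] [Finite G] (H : Subgroup G)
    (hidx : ∃ m : ℕ, H.index = 2 ^ m)
    (hodd : ∀ x : G, Odd (orderOf x) → x ∈ H)
    (hH : ∀ Q₀ : Sylow 2 H, Subgroup.normalizer ((Q₀ : Subgroup H) : Set H) =
      (Q₀ : Subgroup H) ⊔ Subgroup.centralizer ((Q₀ : Subgroup H) : Set H))
    (Q : Sylow 2 G) :
    Subgroup.normalizer ((Q : Subgroup G) : Set G) =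
      (Q : Subgroup G) ⊔ Subgroup.centralizer ((Q : Subgroup G) : Set G) := by
  haveI : Fact (Nat.Prime 2) := ⟨Nat.prime_two⟩
  obtain ⟨m, hm⟩ := hidx
  set P : Subgroup G := (Q : Subgroup G) with hP
  refine le_antisymm ?_ (sup_le le_normalizer ?_)
  swap
  · -- centralizer ≤ normalizer
    intro c hc
    rw [mem_normalizer_iff]
    intro x
    rw [mem_centralizer_iff] at hc
    constructor
    · intro hx
      have := hc x hx
      have h2 : c * x * c⁻¹ = x := by rw [← this]; group
      rwa [h2]
    · intro hx
      have h3 := hc _ hx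
      have h4 : c * x = c * (c * x * c⁻¹) := by
        rw [← h3]; group
      have h5 := mul_left_cancel h4
      rw [h5]; exact hx
  -- main direction
  intro n hn
  obtain ⟨u, v, huv, humem, hvmem, ⟨a, hua⟩, hvodd⟩ := aux_decomp n
  have hun : u ∈ Subgroup.normalizer (P : Set G) := zpowers_le.mpr hn humem
  have hvn : v ∈ Subgroup.normalizer (P : Set G) := zpowers_le.mpr hn hvmem
  -- the 2-part lies in Q
  have huQ : u ∈ P := by
    have hu2 : IsPGroup 2 (Subgroup.zpowers u) := by
      intro x
      obtain ⟨k, hk⟩ := mem_zpowers_iff.mp x.2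
      refine ⟨a, ?_⟩
      ext
      push_cast
      rw [← hk, ← zpow_natCast, ← zpow_mul, mul_comm, zpow_mul, zpow_natCast, hua, one_zpow]
    have hsup : IsPGroup 2 ((Subgroup.zpowers u ⊔ P : Subgroup G)) :=
      hu2.to_sup_of_normal_right' Q.2 (zpowers_le.mpr hun)
    have heq : Subgroup.zpowers u ⊔ P = P := Q.3 hsup le_sup_right
    rw [← heq]
    exact (le_sup_left : Subgroup.zpowers u ≤ Subgroup.zpowers u ⊔ P) (mem_zpowers u)
  -- the odd part centralizes Q
  have hvH : v ∈ H := hodd v hvodd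
  set QH : Subgroup ↥H := (P ⊓ H).subgroupOf H with hQH
  have hQH2 : IsPGroup 2 QH :=
    (Q.2.to_inf_left).of_equiv (subgroupOfEquivOfLe inf_le_right).symm
  -- QH has odd index in H
  have hPodd : ¬ 2 ∣ P.index := Q.not_dvd_index
  obtain ⟨aQ, haQ⟩ : ∃ k, Nat.card P = 2 ^ k := (IsPGroup.iff_card.mp Q.2)
  have hr1 : (P ⊓ H).relIndex H * H.index = (P ⊓ H).index :=
    relIndex_mul_index inf_le_right
  have hr2 : (P ⊓ H).relIndex P * P.index = (P ⊓ H).index :=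
    relIndex_mul_index inf_le_left
  have ht_dvd : (P ⊓ H).relIndex P ∣ 2 ^ aQ := by
    rw [← haQ]
    exact Subgroup.index_dvd_card _
  have ht_le : (P ⊓ H).relIndex P ≤ 2 ^ m := by
    rw [inf_relIndex_left, ← hm, ← relIndex_top_right H]
    refine relIndex_le_of_le_right le_top ?_
    rw [relIndex_top_right]
    exact H.index_ne_zero_of_finite
  have hQHodd : ¬ 2 ∣ QH.index := by
    intro h2r
    have hd : 2 ^ (m + 1) ∣ (P ⊓ H).relIndex H * H.index := by
      rw [hm, pow_succ, mul_comm ((P ⊓ H).relIndex H)]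
      exact mul_dvd_mul dvd_rfl h2r
    rw [hr1, ← hr2] at hd
    have hcop : Nat.Coprime (2 ^ (m + 1)) P.index :=
      ((Nat.prime_two.coprime_iff_not_dvd).mpr hPodd).pow_left (m + 1)
    have hd2 : 2 ^ (m + 1) ∣ (P ⊓ H).relIndex P := hcop.dvd_of_dvd_mul_right hd
    have hne : (P ⊓ H).relIndex P ≠ 0 := by
      intro h0
      rw [h0] at ht_dvd
      exact (pow_ne_zero aQ two_ne_zero) (zero_dvd_iff.mp ht_dvd)
    have := Nat.le_of_dvd (Nat.pos_of_ne_zero hne) hd2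
    have hlt : (2 : ℕ) ^ m < 2 ^ (m + 1) := Nat.pow_lt_pow_right one_lt_two (Nat.lt_succ_self m)
    omega
  -- QH is a Sylow 2-subgroup of H
  obtain ⟨S, hSle⟩ := hQH2.exists_le_sylow
  have hSQ : (S : Subgroup ↥H) = QH := by
    have hrel : QH.relIndex S * (S : Subgroup ↥H).index = QH.index :=
      relIndex_mul_index hSle
    have hdvd1 : QH.relIndex S ∣ QH.index := ⟨_, hrel.symm⟩
    obtain ⟨aS, haS⟩ : ∃ k, Nat.card (S : Subgroup ↥H) = 2 ^ k := (IsPGroup.iff_card.mp S.2)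
    have hdvd2 : QH.relIndex S ∣ 2 ^ aS := haS ▸ Subgroup.index_dvd_card _
    have hodd' : Odd (QH.relIndex S) := by
      rw [Nat.odd_iff]
      rcases Nat.even_or_odd (QH.relIndex S) with he | ho'
      · exact absurd (dvd_trans (even_iff_two_dvd.mp he) hdvd1) hQHodd
      · exact Nat.odd_iff.mp ho'
    have := aux_odd_eq_one hodd' hdvd2
    exact le_antisymm (relIndex_eq_one.mp this) hSle
  have hnormEq : Subgroup.normalizer (QH : Set H) = QH ⊔ Subgroup.centralizer (QH : Set H) := by
    have := hH S
    rwa [hSQ] at this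
  set vH : ↥H := ⟨v, hvH⟩ with hvHdef
  have hvHnorm : vH ∈ Subgroup.normalizer (QH : Set H) := by
    rw [mem_normalizer_iff]
    intro x
    simp only [hQH, mem_subgroupOf]
    rw [mem_normalizer_iff] at hvn
    constructor
    · rintro ⟨hxQ, hxH⟩
      constructor
      · have := (hvn (x : G)).mp hxQ
        simpa using this
      · exact H.mul_mem (H.mul_mem hvH hxH) (H.inv_mem hvH)
    · rintro ⟨hxQ, _⟩
      refine ⟨?_, x.2⟩
      have := (hvn (x : G)).mpr (by simpa using hxQ)
      exact this
  have hvHodd : Odd (orderOf vH) := by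
    have h7 : orderOf vH = orderOf v := by
      have := orderOf_injective H.subtype Subtype.coe_injective vH
      exact Subgroup.orderOf_mk v hvH
    rwa [h7]
  have hvHc : vH ∈ Subgroup.centralizer (QH : Set H) := by
    apply aux_odd_mem_centralizer QH hQH2 hvHodd
    rw [← hnormEq]
    exact hvHnorm
  have hvcomm : ∀ c : G, c ∈ P ⊓ H → c * v = v * c := by
    intro c hc
    rw [mem_centralizer_iff] at hvHc
    have hmem : (⟨c, hc.2⟩ : H) ∈ QH := by
      rw [hQH, mem_subgroupOf]; exact hc
    have := hvHc ⟨c, hc.2⟩ hmem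
    exact congrArg Subtype.val this
  -- v centralizes Q
  have hvC : v ∈ Subgroup.centralizer (P : Set G) := by
    rw [mem_centralizer_iff]
    intro x hx
    set c : G := x⁻¹ * (v⁻¹ * x * v) with hc
    have hvinv : v⁻¹ ∈ Subgroup.normalizer (P : Set G) := (Subgroup.normalizer (P : Set G)).inv_mem hvn
    have hxv : v⁻¹ * x * v ∈ P := by
      rw [mem_normalizer_iff] at hvinv
      have := (hvinv x).mp hx
      simpa using this
    have hcQ : c ∈ P := P.mul_mem (P.inv_mem hx) hxv
    have hcH : c ∈ H := by
      have hconj : orderOf (x⁻¹ * v⁻¹ * x) = orderOf v := by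
        have h1 := orderOf_injective (MulAut.conj x⁻¹).toMonoidHom
          (MulEquiv.injective _) v⁻¹
        simp only [MulEquiv.coe_toMonoidHom, MulAut.conj_apply, inv_inv] at h1
        rw [h1, orderOf_inv]
      have hmem1 : x⁻¹ * v⁻¹ * x ∈ H := hodd _ (hconj ▸ hvodd)
      have : c = (x⁻¹ * v⁻¹ * x) * v := by rw [hc]; group
      rw [this]
      exact H.mul_mem hmem1 hvH
    have hcv : c * v = v * c := hvcomm c ⟨hcQ, hcH⟩
    have hcommute : Commute v c := hcv.symm
    have hkey : ∀ k : ℕ, (v⁻¹) ^ k * x * v ^ k = x * c ^ k := by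
      intro k
      induction k with
      | zero => simp
      | succ k ih =>
        have hvc : v⁻¹ * x * v = x * c := by rw [hc]; group
        calc (v⁻¹) ^ (k + 1) * x * v ^ (k + 1)
            = (v⁻¹) ^ k * (v⁻¹ * x * v) * v ^ k := by
              rw [pow_succ, pow_succ' v]; group
          _ = (v⁻¹) ^ k * (x * c) * v ^ k := by rw [hvc]
          _ = ((v⁻¹) ^ k * x * v ^ k) * ((v⁻¹) ^ k * c * v ^ k) := by group
          _ = (x * c ^ k) * ((v⁻¹) ^ k * c * v ^ k) := by rw [ih]
          _ = (x * c ^ k) * c := by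
              have h8 : (v⁻¹) ^ k * c * v ^ k = c := by
                have h5 : Commute ((v ^ k)⁻¹) c := (hcommute.pow_left k).inv_left
                rw [inv_pow]
                calc (v ^ k)⁻¹ * c * v ^ k = c * (v ^ k)⁻¹ * v ^ k := by rw [h5.eq]
                  _ = c := by group
              rw [h8]
          _ = x * c ^ (k + 1) := by rw [pow_succ, mul_assoc]
    have hfin := hkey (orderOf v)
    rw [inv_pow, pow_orderOf_eq_one, inv_one, one_mul, mul_one] at hfin
    have hcb : c ^ orderOf v = 1 := by
      have := hfin.symm
      rwa [mul_eq_left] at this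
    have hcodd : Odd (orderOf c) := Odd.of_dvd_nat hvodd (orderOf_dvd_of_pow_eq_one hcb)
    obtain ⟨kc, hkc⟩ := Q.2 ⟨c, hcQ⟩
    have hc2 : c ^ (2 ^ kc) = 1 := by
      have := congrArg Subtype.val hkc
      push_cast at this
      exact this
    have hc1 : c = 1 := orderOf_eq_one_iff.mp
      (aux_odd_eq_one hcodd (orderOf_dvd_of_pow_eq_one hc2))
    have : v⁻¹ * x * v = x := by
      have h6 : v⁻¹ * x * v = x * c := by rw [hc]; group
      rw [h6, hc1, mul_one]
    calc x * v = v * (v⁻¹ * x * v) := by group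
      _ = v * x := by rw [this]
  rw [huv]
  exact Subgroup.mul_mem _
    ((le_sup_left : P ≤ P ⊔ Subgroup.centralizer (P : Set G)) huQ)
    ((le_sup_right : Subgroup.centralizer (P : Set G) ≤ P ⊔ _) hvC)
end

section
/- Let G be a finite group, K a Carter subgroup of G, and z a nontrivial element of the center of K. Assume that any two Carter subgroups of the centralizer C_G(z) are conjugate in C_G(z). Then for every x ∈ G, if x⁻¹zx lies in the center of K then x⁻¹zx = z. In particular, z is not conjugate in G to any power zᵏ with zᵏ ≠ z. -/
/-- A Carter subgroup: a nilpotent self-normalizing subgroup. -/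
def IsCarterSubgroup {G : Type*} [Group G] (H : Subgroup G) : Prop :=
  Group.IsNilpotent H ∧ Subgroup.normalizer (H : Set G) = H

lemma isCarterSubgroup_subgroupOf {G : Type*} [Group G] {K C : Subgroup G} (hKC : K ≤ C)
    (hK : IsCarterSubgroup K) : IsCarterSubgroup (K.subgroupOf C) := by
  obtain ⟨hnil, hnorm⟩ := hK
  constructor
  · exact @nilpotent_of_mulEquiv _ _ _ _ hnil (Subgroup.subgroupOfEquivOfLe hKC).symm
  · apply le_antisymm _ Subgroup.le_normalizer
    intro c hc
    rw [Subgroup.mem_normalizer_iff] at hc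
    have hcK : (c : G) ∈ K := by
      rw [← hnorm, Subgroup.mem_normalizer_iff]
      intro h
      constructor
      · intro hh
        have := (hc ⟨h, hKC hh⟩).1 (by simpa [Subgroup.mem_subgroupOf] using hh)
        simpa [Subgroup.mem_subgroupOf] using this
      · intro hh
        have hhC : h ∈ C := by
          have h2 : (c : G)⁻¹ * ((c : G) * h * (c : G)⁻¹) * (c : G) ∈ C :=
            C.mul_mem (C.mul_mem (C.inv_mem c.2) (hKC hh)) c.2
          simpa [mul_assoc] using h2
        have := (hc ⟨h, hhC⟩).2 (by simpa [Subgroup.mem_subgroupOf] using hh)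
        simpa [Subgroup.mem_subgroupOf] using this
    simpa [Subgroup.mem_subgroupOf] using hcK

lemma isCarterSubgroup_map_conj {G : Type*} [Group G] {K : Subgroup G}
    (hK : IsCarterSubgroup K) (x : G) :
    IsCarterSubgroup (K.map (MulAut.conj x).toMonoidHom) := by
  obtain ⟨hnil, hnorm⟩ := hK
  constructor
  · exact @nilpotent_of_mulEquiv _ _ _ _ hnil ((MulAut.conj x).subgroupMap K)
  · rw [← Subgroup.map_equiv_normalizer_eq K (MulAut.conj x), hnorm]

/-- Let `K` be a Carter subgroup of a finite group `G` and `z ≠ 1` a central element of `K`.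
If Carter subgroups of `C_G(z)` are conjugate, then no `G`-conjugate of `z` other than `z`
itself lies in the center of `K`; in particular `z` is not conjugate to any power `z^k ≠ z`. -/
theorem central_element_of_carter_not_conjugate {G : Type*} [Group G] [Finite G]
    (K : Subgroup G) (hK : IsCarterSubgroup K) (z : G) (hz1 : z ≠ 1)
    (hzK : z ∈ K ⊓ Subgroup.centralizer (K : Set G))
    (hconj : ∀ H₁ H₂ : Subgroup (Subgroup.centralizer ({z} : Set G)),
      IsCarterSubgroup H₁ → IsCarterSubgroup H₂ →
        ∃ c : Subgroup.centralizer ({z} : Set G),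
          H₂ = H₁.map (MulAut.conj c).toMonoidHom) :
    (∀ x : G, x⁻¹ * z * x ∈ K ⊓ Subgroup.centralizer (K : Set G) → x⁻¹ * z * x = z) ∧
    (∀ (x : G) (k : ℤ), x⁻¹ * z * x = z ^ k → z ^ k = z) := by
  set C := Subgroup.centralizer ({z} : Set G) with hC
  obtain ⟨hzk, hzc⟩ := hzK
  have hzc' : ∀ g ∈ K, g * z = z * g := Subgroup.mem_centralizer_iff.1 hzc
  have hKC : K ≤ C := fun g hg => by
    rw [hC, Subgroup.mem_centralizer_singleton_iff]
    exact hzc' g hg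
  have main : ∀ x : G, x⁻¹ * z * x ∈ K ⊓ Subgroup.centralizer (K : Set G) → x⁻¹ * z * x = z := by
    intro x hw
    obtain ⟨hwK, hwc⟩ := hw
    have hwc' : ∀ g ∈ K, g * (x⁻¹ * z * x) = (x⁻¹ * z * x) * g := Subgroup.mem_centralizer_iff.1 hwc
    set Q := K.map (MulAut.conj x).toMonoidHom with hQ
    have hQC : Q ≤ C := by
      rintro g ⟨k, hk, rfl⟩
      rw [hC, Subgroup.mem_centralizer_singleton_iff]
      have h2 := congrArg (fun g => x * g * x⁻¹) (hwc' k hk)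
      simpa [MulAut.conj_apply, mul_assoc] using h2
    have hcart1 : IsCarterSubgroup (K.subgroupOf C) := isCarterSubgroup_subgroupOf hKC hK
    have hcart2 : IsCarterSubgroup (Q.subgroupOf C) :=
      isCarterSubgroup_subgroupOf hQC (isCarterSubgroup_map_conj hK x)
    obtain ⟨c, hc⟩ := hconj (K.subgroupOf C) (Q.subgroupOf C) hcart1 hcart2
    have hmap : Q = K.map (MulAut.conj (c : G)).toMonoidHom := by
      have h1 := congrArg (Subgroup.map C.subtype) hc
      rw [Subgroup.subgroupOf_map_subtype, inf_eq_left.mpr hQC, Subgroup.map_map] at h1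
      have h2 : C.subtype.comp (MulAut.conj c).toMonoidHom
          = ((MulAut.conj (c : G)).toMonoidHom).comp C.subtype := by
        ext g; simp [MulAut.conj_apply]
      rw [h2, ← Subgroup.map_map, Subgroup.subgroupOf_map_subtype, inf_eq_left.mpr hKC] at h1
      exact h1
    obtain ⟨hKnil, hKnorm⟩ := hK
    have hd : (c : G)⁻¹ * x ∈ K := by
      rw [← hKnorm, Subgroup.mem_normalizer_iff]
      intro h
      constructor
      · intro hh
        have h1 : (MulAut.conj x) h ∈ Q := Subgroup.mem_map_of_mem _ hh
        rw [hmap, Subgroup.mem_map_equiv] at h1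
        simpa [MulAut.conj_apply, mul_assoc, mul_inv_rev] using h1
      · intro hh
        have h1 : (MulAut.conj (c : G))
            (((c : G)⁻¹ * x) * h * ((c : G)⁻¹ * x)⁻¹) ∈ Q := by
          rw [hmap]; exact Subgroup.mem_map_of_mem _ hh
        rw [hQ, Subgroup.mem_map_equiv] at h1
        simpa [MulAut.conj_apply, mul_assoc, mul_inv_rev] using h1
    have hcz : (c : G) * z = z * (c : G) :=
      Subgroup.mem_centralizer_singleton_iff.1 c.2
    have e1 : (c : G)⁻¹ * z * (c : G) = z := by
      rw [mul_assoc, ← hcz, inv_mul_cancel_left]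
    have e3 : x⁻¹ * z * x
        = ((c : G)⁻¹ * x)⁻¹ * ((c : G)⁻¹ * z * (c : G)) * ((c : G)⁻¹ * x) := by group
    rw [e3, e1, mul_assoc, ← hzc' _ hd, inv_mul_cancel_left]
  refine ⟨main, fun x k hx => ?_⟩
  have hmem : x⁻¹ * z * x ∈ K ⊓ Subgroup.centralizer (K : Set G) := by
    rw [hx]
    exact ⟨K.zpow_mem hzk k, Subgroup.zpow_mem _ hzc k⟩
  rw [← hx]
  exact main x hmem
end

section
/- Let G be a finite group, K a Carter subgroup of G, and Y a subgroup of G containing K such that any two Carter subgroups of Y are conjugate in Y. Then Y is self-normalizing in G, i.e., the normalizer of Y in G equals Y. -/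
lemma isCarter_subgroupOf {G : Type*} [Group G] {H Y : Subgroup G}
    (hH : IsCarterSubgroup H) (hHY : H ≤ Y) : IsCarterSubgroup (H.subgroupOf Y) := by
  obtain ⟨hnil, hnorm⟩ := hH
  constructor
  · exact nilpotent_of_mulEquiv (Subgroup.subgroupOfEquivOfLe hHY).symm
  · rw [← Subgroup.subgroupOf_normalizer_eq hHY, hnorm]

lemma mem_normalizer_of_map_conj_eq {G : Type*} [Group G] {K : Subgroup G} {z : G}
    (h : K.map (MulAut.conj z).toMonoidHom = K) : z ∈ Subgroup.normalizer (K : Set G) := by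
  rw [Subgroup.mem_normalizer_iff]
  intro n
  constructor
  · intro hn
    rw [← h]
    exact ⟨n, hn, rfl⟩
  · intro hn
    rw [← h] at hn
    obtain ⟨m, hm, hme⟩ := hn
    have hme' : z * m * z⁻¹ = z * n * z⁻¹ := hme
    have : m = n := mul_left_cancel (mul_right_cancel hme')
    rwa [← this]

/-- A subgroup `Y` of a finite group `G` containing a Carter subgroup of `G` and in which
Carter subgroups are conjugate is self-normalizing. -/
theorem self_normalizing_of_contains_carter {G : Type*} [Group G] [Finite G]
    (K Y : Subgroup G) (hK : IsCarterSubgroup K) (hKY : K ≤ Y)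
    (hconj : ∀ H₁ H₂ : Subgroup Y, IsCarterSubgroup H₁ → IsCarterSubgroup H₂ →
      ∃ y : Y, H₂ = H₁.map (MulAut.conj y).toMonoidHom) :
    Subgroup.normalizer (Y : Set G) = Y := by
  refine le_antisymm ?_ Subgroup.le_normalizer
  intro g hg
  set Kg := K.map (MulAut.conj g).toMonoidHom with hKg
  have hKgY : Kg ≤ Y := by
    rintro _ ⟨k, hk, rfl⟩
    exact (Subgroup.mem_normalizer_iff.mp hg k).mp (hKY hk)
  have hKgCarter : IsCarterSubgroup Kg := by
    obtain ⟨hnil, hnorm⟩ := hK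
    constructor
    · exact nilpotent_of_mulEquiv
        (Subgroup.equivMapOfInjective K _ (MulAut.conj g).injective)
    · rw [hKg, ← Subgroup.map_equiv_normalizer_eq K (MulAut.conj g), hnorm]
  obtain ⟨y, hy⟩ := hconj (K.subgroupOf Y) (Kg.subgroupOf Y)
    (isCarter_subgroupOf hK hKY) (isCarter_subgroupOf hKgCarter hKgY)
  -- map the equation back to G
  have hy' : K.map (MulAut.conj g).toMonoidHom = K.map (MulAut.conj (y : G)).toMonoidHom := by
    have h1 := congrArg (Subgroup.map Y.subtype) hy
    rw [Subgroup.subgroupOf_map_subtype, inf_eq_left.mpr hKgY, Subgroup.map_map] at h1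
    have hcomp : Y.subtype.comp (MulAut.conj y).toMonoidHom
        = (MulAut.conj (y : G)).toMonoidHom.comp Y.subtype := by
      ext x; simp [MulAut.conj]
    rw [hcomp, ← Subgroup.map_map, Subgroup.subgroupOf_map_subtype, inf_eq_left.mpr hKY] at h1
    exact h1
  have hmap : K.map (MulAut.conj ((y : G)⁻¹ * g)).toMonoidHom = K := by
    have e1 : MulAut.conj ((y : G)⁻¹ * g) = MulAut.conj (y : G)⁻¹ * MulAut.conj g := by
      rw [map_mul, map_inv]
    have e2 : (MulAut.conj (y : G)⁻¹ * MulAut.conj g).toMonoidHom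
        = (MulAut.conj (y : G)⁻¹).toMonoidHom.comp (MulAut.conj g).toMonoidHom := rfl
    rw [e1, e2, ← Subgroup.map_map, hy', Subgroup.map_map]
    have e3 : (MulAut.conj (y : G)⁻¹).toMonoidHom.comp (MulAut.conj (y : G)).toMonoidHom
        = MonoidHom.id G := by
      ext x; simp; group
    rw [e3, Subgroup.map_id]
  have hmem : (y : G)⁻¹ * g ∈ K := hK.2 ▸ mem_normalizer_of_map_conj_eq hmap
  have : (y : G) * ((y : G)⁻¹ * g) ∈ Y := Y.mul_mem y.2 (hKY hmem)
  simpa using this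
end

section
/- Let n ≥ 5 and let σ be a nontrivial element of odd order of the alternating group Alt_n. Then there exists an integer k such that σᵏ ≠ σ and σᵏ is conjugate to σ in Alt_n. -/
open Equiv Equiv.Perm

lemma cycleType_pow_coprime {α : Type*} [Fintype α] [DecidableEq α] {k : ℕ} (f : Perm α)
    (h : Nat.Coprime k (orderOf f)) : (f ^ k).cycleType = f.cycleType := by
  induction f using cycle_induction_on with
  | base_one => simp
  | base_cycles σ hσ =>
    have hc : IsCycle (σ ^ k) := hσ.pow_iff.mpr h
    have hs : (σ ^ k).support = σ.support := by
      rw [hσ.support_pow_eq_iff]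
      intro hd
      have h1 : orderOf σ ∣ Nat.gcd k (orderOf σ) := Nat.dvd_gcd hd dvd_rfl
      rw [h] at h1
      exact hσ.ne_one (orderOf_eq_one_iff.mp (Nat.eq_one_of_dvd_one h1))
    rw [hc.cycleType, hσ.cycleType, hs]
  | induction_disjoint σ τ hd hc hσ hτ =>
    have horder : orderOf (σ * τ) = Nat.lcm (orderOf σ) (orderOf τ) := hd.orderOf
    have hcσ : Nat.Coprime k (orderOf σ) :=
      h.coprime_dvd_right (horder ▸ Nat.dvd_lcm_left _ _)
    have hcτ : Nat.Coprime k (orderOf τ) :=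
      h.coprime_dvd_right (horder ▸ Nat.dvd_lcm_right _ _)
    rw [hd.commute.mul_pow, (Perm.Disjoint.cycleType_mul (hd.pow_disjoint_pow k k)), hd.cycleType_mul,
      hσ hcσ, hτ hcτ]


lemma exists_odd_commuting {α : Type*} [Fintype α] [DecidableEq α] (f : Perm α)
    (hcard : 5 ≤ Fintype.card α) (h3 : orderOf f = 3) :
    ∃ c : Perm α, Perm.sign c = -1 ∧ Commute c f := by
  have hf3 : f ^ 3 = 1 := h3 ▸ pow_orderOf_eq_one f
  by_cases hA : 2 ≤ (f.supportᶜ).card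
  · obtain ⟨a, ha, b, hb, hab⟩ := Finset.one_lt_card.mp hA
    refine ⟨swap a b, sign_swap hab, ?_⟩
    have hdisj : f.Disjoint (swap a b) := by
      intro z
      by_cases hz : z = a ∨ z = b
      · left
        rcases hz with rfl | rfl
        · exact notMem_support.mp (Finset.mem_compl.mp ha)
        · exact notMem_support.mp (Finset.mem_compl.mp hb)
      · push_neg at hz
        right
        exact swap_apply_of_ne_of_ne hz.1 hz.2
    exact hdisj.commute.symm
  · -- support is big: at least two 3-cycles
    push_neg at hA
    have hsupp : 4 ≤ f.support.card := by
      have := Finset.card_add_card_compl f.support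
      omega
    obtain ⟨x, hx⟩ : f.support.Nonempty := Finset.card_pos.mp (by omega)
    have hxmem : ∀ m : ℕ, (f ^ m) x ∈ ({x, f x, f (f x)} : Finset α) := by
      intro m
      induction m with
      | zero => simp
      | succ m ih =>
        have hfx : f (f (f x)) = x := by
          have := congrArg (· x) hf3
          simpa [pow_succ, Perm.mul_apply] using this
        simp only [Finset.mem_insert, Finset.mem_singleton] at ih ⊢
        rw [pow_succ', Perm.mul_apply]
        rcases ih with h | h | h <;> rw [h] <;> simp [hfx]
    set T : Finset α := {x, f x, f (f x)} with hT
    have hTcard : T.card ≤ 3 := by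
      apply (Finset.card_insert_le _ _).trans
      have := Finset.card_insert_le (f x) ({f (f x)} : Finset α)
      simp at this ⊢
      omega
    have : ¬ f.support ⊆ T := fun hsub => by
      have := Finset.card_le_card hsub
      omega
    obtain ⟨y, hy, hyT⟩ := Finset.not_subset.mp this
    have hpow3 : ∀ (z : α) (i : ℕ), (f ^ (3 * i)) z = z := by
      intro z i
      rw [pow_mul, hf3, one_pow]
      rfl
    have hyx : ∀ i j : ℕ, (f ^ i) y ≠ (f ^ j) x := by
      intro i j h
      apply hyT
      have : y = (f ^ (2 * i + j)) x := by
        have := congrArg (f ^ (2 * i)) h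
        rwa [← Perm.mul_apply, ← Perm.mul_apply, ← pow_add, ← pow_add,
          show 2 * i + i = 3 * i by ring, hpow3] at this
      rw [this]
      exact hxmem _
    have hdist : ∀ z ∈ f.support, f z ≠ z ∧ f (f z) ≠ z ∧ f (f z) ≠ f z := by
      intro z hz
      have h1 : f z ≠ z := mem_support.mp hz
      have hz3 : f (f (f z)) = z := by
        have := congrArg (· z) hf3
        simpa [pow_succ, Perm.mul_apply] using this
      refine ⟨h1, fun h => ?_, fun h => h1 (f.injective h)⟩
      rw [h] at hz3
      exact h1 hz3
    obtain ⟨hx1, hx2, hx3⟩ := hdist x hx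
    obtain ⟨hy1, hy2, hy3⟩ := hdist y hy
    -- the six points
    have e00 : y ≠ x := by simpa using hyx 0 0
    have e01 : y ≠ f x := by simpa [pow_succ] using hyx 0 1
    have e02 : y ≠ f (f x) := by simpa [pow_succ, Perm.mul_apply] using hyx 0 2
    have e10 : f y ≠ x := by simpa [pow_succ] using hyx 1 0
    have e11 : f y ≠ f x := by simpa [pow_succ] using hyx 1 1
    have e12 : f y ≠ f (f x) := by simpa [pow_succ, Perm.mul_apply] using hyx 1 2
    have e20 : f (f y) ≠ x := by simpa [pow_succ, Perm.mul_apply] using hyx 2 0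
    have e21 : f (f y) ≠ f x := by simpa [pow_succ, Perm.mul_apply] using hyx 2 1
    have e22 : f (f y) ≠ f (f x) := by simpa [pow_succ, Perm.mul_apply] using hyx 2 2
    set s0 := swap x y with hs0
    set s1 := swap (f x) (f y) with hs1
    set s2 := swap (f (f x)) (f (f y)) with hs2
    have swaps_disjoint : ∀ a b c d : α, a ≠ c → a ≠ d → b ≠ c → b ≠ d →
        Perm.Disjoint (swap a b) (swap c d) := by
      intro a b c d hac had hbc hbd z
      by_cases hz : z = a ∨ z = b
      · right
        rcases hz with rfl | rfl
        · exact swap_apply_of_ne_of_ne hac had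
        · exact swap_apply_of_ne_of_ne hbc hbd
      · push_neg at hz
        left
        exact swap_apply_of_ne_of_ne hz.1 hz.2
    have c01 : Commute s0 s1 :=
      (swaps_disjoint _ _ _ _ hx1.symm e10.symm e01 (Ne.symm hy1)).commute
    have c02 : Commute s0 s2 :=
      (swaps_disjoint _ _ _ _ hx2.symm e20.symm e02 (Ne.symm hy2)).commute
    have hfx3 : f (f (f x)) = x := by
      have := congrArg (· x) hf3
      simpa [pow_succ, Perm.mul_apply] using this
    have hfy3 : f (f (f y)) = y := by
      have := congrArg (· y) hf3
      simpa [pow_succ, Perm.mul_apply] using this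
    have h0 : f * s0 = s1 * f := by
      rw [hs0, hs1, swap_apply_apply f x y]; group
    have h1 : f * s1 = s2 * f := by
      rw [hs1, hs2, swap_apply_apply f (f x) (f y)]; group
    have h2 : f * s2 = s0 * f := by
      rw [hs2, hs0]
      nth_rewrite 2 [← hfx3]
      nth_rewrite 2 [← hfy3]
      rw [swap_apply_apply f (f (f x)) (f (f y))]; group
    refine ⟨s0 * s1 * s2, ?_, ?_⟩
    · simp [hs0, hs1, hs2, sign_swap e00.symm, sign_swap e11.symm, sign_swap e22.symm]
    · show s0 * s1 * s2 * f = f * (s0 * s1 * s2)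
      have key : f * (s0 * s1 * s2) = s1 * s2 * s0 * f := by
        rw [show f * (s0 * s1 * s2) = f * s0 * s1 * s2 by group, h0,
          show s1 * f * s1 * s2 = s1 * (f * s1) * s2 by group, h1,
          show s1 * (s2 * f) * s2 = s1 * s2 * (f * s2) by group, h2]
        group
      rw [key, show s1 * s2 * s0 = s0 * (s1 * s2) from ((c01.mul_right c02).eq).symm]
      group

/-- Every nontrivial element of odd order of the alternating group `Alt n`, `n ≥ 5`, is
conjugate to some power `σ^k ≠ σ`. -/
theorem alternating_odd_order_conjugate_power (n : ℕ) (hn : 5 ≤ n)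
    (σ : alternatingGroup (Fin n)) (hσ : σ ≠ 1) (hodd : Odd (orderOf σ)) :
    ∃ (k : ℤ) (g : alternatingGroup (Fin n)), σ ^ k ≠ σ ∧ g⁻¹ * σ * g = σ ^ k := by
  set f : Perm (Fin n) := (σ : Perm (Fin n)) with hf
  have hof : orderOf f = orderOf σ :=
    orderOf_injective (alternatingGroup (Fin n)).subtype Subtype.coe_injective σ
  have hd1 : orderOf f ≠ 1 := by
    rw [hof]
    exact fun h => hσ (orderOf_eq_one_iff.mp h)
  have hoddf : Odd (orderOf f) := hof ▸ hodd
  have hcop : Nat.Coprime 2 (orderOf f) :=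
    (Nat.Prime.coprime_iff_not_dvd Nat.prime_two).mpr (by
      intro h
      exact (Nat.not_even_iff_odd.mpr hoddf) (even_iff_two_dvd.mpr h))
  have conj2 : IsConj f (f ^ 2) := isConj_of_cycleType_eq (cycleType_pow_coprime f hcop).symm
  have conjinv : IsConj f f⁻¹ := isConj_of_cycleType_eq (by rw [cycleType_inv])
  obtain ⟨ρ, hρ⟩ := isConj_iff.mp conj2
  obtain ⟨τ, hτ⟩ := isConj_iff.mp conjinv
  have hfne1 : f ≠ 1 := fun h => hd1 (orderOf_eq_one_iff.mpr h)
  suffices h : ∃ (k : ℤ) (g : Perm (Fin n)), g ∈ alternatingGroup (Fin n) ∧ f ^ k ≠ f ∧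
      g⁻¹ * f * g = f ^ k by
    obtain ⟨k, g, hg, hne, hconj⟩ := h
    refine ⟨k, ⟨g, hg⟩, fun h' => hne ?_, ?_⟩
    · have := congrArg (Subtype.val) h'
      push_cast at this
      exact this
    · apply Subtype.ext
      push_cast
      exact hconj
  -- basic non-equalities
  have hne2 : f ^ (2 : ℤ) ≠ f := by
    intro h
    apply hfne1
    have h' : f * f = f * 1 := by
      rw [mul_one]
      calc f * f = f ^ (2 : ℤ) := (zpow_two f).symm
        _ = f := h
    exact mul_left_cancel h' 
  rcases Int.units_eq_one_or (Perm.sign ρ) with hsρ | hsρ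
  · refine ⟨2, ρ⁻¹, ?_, hne2, ?_⟩
    · rw [mem_alternatingGroup, map_inv, hsρ]; rfl
    · rw [inv_inv]
      rw [show ((2 : ℤ)) = ((2 : ℕ) : ℤ) by norm_num, zpow_natCast]
      exact hρ
  rcases Int.units_eq_one_or (Perm.sign τ) with hsτ | hsτ
  · refine ⟨-1, τ⁻¹, ?_, ?_, ?_⟩
    · rw [mem_alternatingGroup, map_inv, hsτ]; rfl
    · rw [zpow_neg_one]
      intro h
      have h2 : f ^ 2 = 1 := by
        rw [pow_two]
        nth_rewrite 1 [← h]
        group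
      have hdvd : orderOf f ∣ 2 := orderOf_dvd_of_pow_eq_one h2
      have h1 : orderOf f ∣ Nat.gcd 2 (orderOf f) := Nat.dvd_gcd hdvd dvd_rfl
      rw [hcop] at h1
      exact hd1 (Nat.eq_one_of_dvd_one h1)
    · rw [inv_inv, zpow_neg_one]; exact hτ
  by_cases hd3 : orderOf f = 3
  · obtain ⟨c, hsc, hcomm⟩ := exists_odd_commuting f (by simpa using hn) hd3
    refine ⟨2, (c * ρ)⁻¹, ?_, hne2, ?_⟩
    · rw [mem_alternatingGroup, map_inv, map_mul, hsc, hsρ]; rfl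
    · rw [inv_inv, show ((2 : ℤ)) = ((2 : ℕ) : ℤ) by norm_num, zpow_natCast]
      have : (c * ρ) * f * (c * ρ)⁻¹ = c * (ρ * f * ρ⁻¹) * c⁻¹ := by group
      rw [mul_inv_rev] at this ⊢
      rw [this, hρ, (hcomm.pow_right 2).eq]
      group
  · refine ⟨-2, (τ * ρ)⁻¹, ?_, ?_, ?_⟩
    · rw [mem_alternatingGroup, map_inv, map_mul, hsτ, hsρ]; rfl
    · intro h
      have h2 : (f ^ (2 : ℤ))⁻¹ = f := by rw [← zpow_neg]; exact h
      have h2' : f ^ (2 : ℤ) = f⁻¹ := by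
        have := congrArg Inv.inv h2
        rwa [inv_inv] at this
      have h3 : f ^ (3 : ℕ) = 1 := by
        calc f ^ (3 : ℕ) = f ^ (2 : ℤ) * f := by group
          _ = f⁻¹ * f := by rw [h2']
          _ = 1 := by group
      have hdvd : orderOf f ∣ 3 := orderOf_dvd_of_pow_eq_one h3
      rcases (Nat.Prime.eq_one_or_self_of_dvd Nat.prime_three _ hdvd) with h' | h'
      · exact hd1 h'
      · exact hd3 h'
    · rw [inv_inv]
      have key : (τ * ρ) * f * (τ * ρ)⁻¹ = τ * (ρ * f * ρ⁻¹) * τ⁻¹ := by group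
      rw [mul_inv_rev] at key ⊢
      rw [key, hρ, show τ * f ^ 2 * τ⁻¹ = (τ * f * τ⁻¹) * (τ * f * τ⁻¹) by
        rw [pow_two]; group, hτ]
      group
end

section
/- The alternating group Alt_5 contains no Carter subgroup: there is no subgroup H of Alt_5 that is both nilpotent and equal to its own normalizer in Alt_5. -/
set_option maxRecDepth 10000 in
/-- Element orders in `Alt 5` divide 2, 3 or 5. -/
theorem alt5_pow_eq_one : ∀ g : Equiv.Perm (Fin 5), Equiv.Perm.sign g = 1 →
    g ^ 2 = 1 ∨ g ^ 3 = 1 ∨ g ^ 5 = 1 := by decide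

theorem alt5_card : Nat.card (alternatingGroup (Fin 5)) = 60 := by
  have h := two_mul_card_alternatingGroup (α := Fin 5)
  have h2 : Fintype.card (Equiv.Perm (Fin 5)) = 120 := by
    simp [Fintype.card_perm, Nat.factorial]
  rw [Nat.card_eq_fintype_card]
  omega

/-- No even permutation of `Fin 5` has order divisible by two distinct primes. -/
theorem alt5_no_two_primes {r s : ℕ} (hr : r.Prime) (hs : s.Prime) (hrs : r ≠ s)
    (x : Equiv.Perm (Fin 5)) (hx : Equiv.Perm.sign x = 1) (hord : orderOf x = r * s) :
    False := by
  have key : ∀ ℓ : ℕ, ℓ.Prime → x ^ ℓ = 1 → False := by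
    intro ℓ hℓ hpow
    have hdvd : r * s ∣ ℓ := hord ▸ orderOf_dvd_of_pow_eq_one hpow
    have h1 : r = ℓ := (Nat.prime_dvd_prime_iff_eq hr hℓ).mp ((dvd_mul_right r s).trans hdvd)
    have h2 : s = ℓ := (Nat.prime_dvd_prime_iff_eq hs hℓ).mp ((dvd_mul_left s r).trans hdvd)
    exact hrs (h1.trans h2.symm)
  rcases alt5_pow_eq_one x hx with h | h | h
  · exact key 2 Nat.prime_two h
  · exact key 3 Nat.prime_three h
  · exact key 5 Nat.prime_five h

/-- The alternating group `Alt 5` contains no Carter subgroup. -/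
theorem alt_five_has_no_carter_subgroup :
    ¬ ∃ H : Subgroup (alternatingGroup (Fin 5)), IsCarterSubgroup H := by
  rintro ⟨H, hnil, hnorm⟩
  have hcardG : Nat.card (alternatingGroup (Fin 5)) = 60 := alt5_card
  haveI hntG : Nontrivial ↥(alternatingGroup (Fin 5)) :=
    Fintype.one_lt_card_iff_nontrivial.mp (by rw [← Nat.card_eq_fintype_card, hcardG]; norm_num)
  -- H is nontrivial
  have hbot : H ≠ ⊥ := by
    intro h
    rw [h, Subgroup.normalizer_eq_top_iff.mpr inferInstance] at hnorm
    exact absurd hnorm top_ne_bot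
  have hcard1 : Nat.card H ≠ 1 := by
    simpa [Subgroup.card_eq_one] using hbot
  have hcard0 : Nat.card H ≠ 0 := Nat.card_pos.ne'
  -- no two distinct primes divide the order of H
  have no_two : ∀ r s : ℕ, r.Prime → s.Prime → r ≠ s → r ∣ Nat.card H →
      s ∣ Nat.card H → False := by
    intro r s hr hs hrs hrd hsd
    haveI : Fact r.Prime := ⟨hr⟩
    haveI : Fact s.Prime := ⟨hs⟩
    obtain ⟨R⟩ : Nonempty (Sylow r H) := inferInstance
    obtain ⟨S⟩ : Nonempty (Sylow s H) := inferInstance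
    haveI : Fintype (R : Subgroup H) := Fintype.ofFinite _
    haveI : Fintype (S : Subgroup H) := Fintype.ofFinite _
    -- elements of order r and s
    have hrR : r ∣ Fintype.card (R : Subgroup H) := by
      rw [← Nat.card_eq_fintype_card, R.card_eq_multiplicity]
      exact dvd_pow_self r (Nat.Prime.factorization_pos_of_dvd hr hcard0 hrd).ne'
    have hsS : s ∣ Fintype.card (S : Subgroup H) := by
      rw [← Nat.card_eq_fintype_card, S.card_eq_multiplicity]
      exact dvd_pow_self s (Nat.Prime.factorization_pos_of_dvd hs hcard0 hsd).ne'
    obtain ⟨g, hg⟩ := exists_prime_orderOf_dvd_card r hrR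
    obtain ⟨k, hk⟩ := exists_prime_orderOf_dvd_card s hsS
    -- Sylow subgroups of the nilpotent group H are normal
    have hnormal : ∀ (q : ℕ) (_ : Fact q.Prime) (Q : Sylow q H), (Q : Subgroup H).Normal :=
      ((isNilpotent_of_finite_tfae (G := H)).out 0 3).mp hnil
    have hRn := hnormal r ⟨hr⟩ R
    have hSn := hnormal s ⟨hs⟩ S
    have hdis : Disjoint (R : Subgroup H) (S : Subgroup H) :=
      IsPGroup.disjoint_of_ne r s hrs _ _ R.isPGroup' S.isPGroup'
    set a : H := ((g : H)) with ha
    set b : H := ((k : H)) with hb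
    have hoa : orderOf a = r :=
      (orderOf_injective (R : Subgroup H).subtype (Subgroup.subtype_injective _) g).trans hg
    have hob : orderOf b = s :=
      (orderOf_injective (S : Subgroup H).subtype (Subgroup.subtype_injective _) k).trans hk
    have hcomm : Commute a b :=
      Subgroup.commute_of_normal_of_disjoint _ _ hRn hSn hdis a b g.2 k.2
    have hoab : orderOf (a * b) = r * s := by
      rw [hcomm.orderOf_mul_eq_mul_orderOf_of_coprime
        (by rw [hoa, hob]; exact (Nat.coprime_primes hr hs).mpr hrs), hoa, hob]
    -- push to a permutation
    set x : Equiv.Perm (Fin 5) :=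
      (((a * b : H) : alternatingGroup (Fin 5)) : Equiv.Perm (Fin 5)) with hx
    have hox : orderOf x = r * s := by
      rw [← hoab]
      have h1 := orderOf_injective H.subtype (Subgroup.subtype_injective _) (a * b)
      have h2 := orderOf_injective (alternatingGroup (Fin 5)).subtype
        (Subgroup.subtype_injective _) ((a * b : H) : alternatingGroup (Fin 5))
      exact h2.trans h1
    have hsign : Equiv.Perm.sign x = 1 :=
      Equiv.Perm.mem_alternatingGroup.mp ((a * b : H) : alternatingGroup (Fin 5)).2
    exact alt5_no_two_primes hr hs hrs x hsign hox
  -- hence H is a p-group for p the least prime factor of its order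
  set p : ℕ := (Nat.card H).minFac with hp
  have hpp : p.Prime := Nat.minFac_prime hcard1
  haveI : Fact p.Prime := ⟨hpp⟩
  have hpdvd : p ∣ Nat.card H := Nat.minFac_dvd _
  set n : ℕ := (Nat.card H).primeFactorsList.length with hn
  have hcardpow : Nat.card H = p ^ n :=
    Nat.eq_prime_pow_of_unique_prime_dvd hcard0 (fun {d} hd hdvd => by
      by_contra hne
      exact no_two d p hd hpp hne hdvd hpdvd)
  have hPG : IsPGroup p H := IsPGroup.of_card hcardpow
  -- H is contained in a Sylow p-subgroup, and self-normalization forces equality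
  obtain ⟨P, hHP⟩ := hPG.exists_le_sylow
  have hPnil : Group.IsNilpotent (P : Subgroup (alternatingGroup (Fin 5))) :=
    P.isPGroup'.isNilpotent
  have hNC : NormalizerCondition (P : Subgroup (alternatingGroup (Fin 5))) :=
    normalizerCondition_of_isNilpotent
  have hkey : Subgroup.normalizer ((H.subgroupOf (P : Subgroup (alternatingGroup (Fin 5)))) : Set _)
      = H.subgroupOf (P : Subgroup (alternatingGroup (Fin 5))) := by
    rw [← Subgroup.subgroupOf_normalizer_eq (by exact hHP), hnorm]
  have htop : H.subgroupOf (P : Subgroup (alternatingGroup (Fin 5))) = ⊤ :=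
    (normalizerCondition_iff_only_full_group_self_normalizing.mp hNC) _ hkey
  have hPH : (P : Subgroup (alternatingGroup (Fin 5))) = H :=
    le_antisymm (Subgroup.subgroupOf_eq_top.mp htop) hHP
  -- H is commutative (it has order p or p², since p³ ∤ 60)
  have hdvd60 : Nat.card H ∣ 60 := hcardG ▸ Subgroup.card_subgroup_dvd_card H
  have hcube : ¬ p ^ 3 ∣ 60 := by
    intro h
    have hple : p ∣ 60 := (dvd_pow_self p three_ne_zero).trans h
    have : p ≤ 60 := Nat.le_of_dvd (by norm_num) hple
    interval_cases p <;> revert h hpp <;> decide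
  have hlen : n = 1 ∨ n = 2 := by
    have h2 : n ≤ 2 := by
      by_contra hgt
      push_neg at hgt
      exact hcube ((pow_dvd_pow p hgt).trans (hcardpow ▸ hdvd60))
    have h0 : n ≠ 0 := by
      intro h
      rw [h, pow_zero] at hcardpow
      exact hcard1 hcardpow
    omega
  have hcomm : ∀ a b : H, a * b = b * a := by
    rcases hlen with h | h
    · have hc : Nat.card H = p := by rw [hcardpow, h, pow_one]
      letI := isCyclic_of_prime_card hc
      letI := IsCyclic.commGroup (α := H)
      exact mul_comm
    · exact IsPGroup.commutative_of_card_eq_prime_sq (by rw [hcardpow, h])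
  -- Burnside's transfer theorem applies
  have hPle : Subgroup.normalizer ((P : Subgroup (alternatingGroup (Fin 5))) : Set _) ≤
      Subgroup.centralizer (P : Set (alternatingGroup (Fin 5))) := by
    rw [hPH, hnorm]
    intro x hxH
    rw [Subgroup.mem_centralizer_iff]
    intro y hyH
    have hyH' : y ∈ H := by rw [← hPH]; exact hyH
    exact Subtype.ext_iff.mp (hcomm ⟨y, hyH'⟩ ⟨x, hxH⟩)
  haveI : IsSimpleGroup ↥(alternatingGroup (Fin 5)) := alternatingGroup.isSimpleGroup_five
  have hker := MonoidHom.ker_transferSylow_isComplement' P hPle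
  rcases (MonoidHom.normal_ker (MonoidHom.transferSylow P hPle)).eq_bot_or_eq_top with hbot' | htop'
  · -- trivial kernel: then |P| = 60, impossible for a p-group
    have hmul := hker.card_mul
    rw [hbot', hcardG] at hmul
    simp only [Subgroup.card_bot, one_mul] at hmul
    rw [hPH, hcardpow] at hmul
    have h2 : (2 : ℕ) ∣ p ^ n := by rw [hmul]; norm_num
    have h3 : (3 : ℕ) ∣ p ^ n := by rw [hmul]; norm_num
    have h2' : (2 : ℕ) = p := (Nat.prime_dvd_prime_iff_eq Nat.prime_two hpp).mp
      (Nat.Prime.dvd_of_dvd_pow Nat.prime_two h2)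
    have h3' : (3 : ℕ) = p := (Nat.prime_dvd_prime_iff_eq Nat.prime_three hpp).mp
      (Nat.Prime.dvd_of_dvd_pow Nat.prime_three h3)
    omega
  · -- full kernel: contradicts p ∤ |ker|
    have hnd := MonoidHom.not_dvd_card_ker_transferSylow P hPle
    rw [htop', Subgroup.card_top, hcardG] at hnd
    exact hnd (hpdvd.trans hdvd60)
end

section
/- Let F be a finite field of odd characteristic p and of cardinality pᵗ, and if p = 3 assume that t is even. Then every element u of order p in the special linear group SL₂(F) is conjugate in SL₂(F) to uᵏ for some natural number k with uᵏ ≠ u. -/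
/-- Let `F` be a finite field of odd characteristic `p` with `p^t` elements, where `t` is even
if `p = 3`. Then every element of order `p` in `SL₂(F)` is conjugate to a power `u^k ≠ u`. -/
theorem sl2_order_p_conjugate_power (p t : ℕ) (hp : p.Prime) (hodd : Odd p)
    (F : Type*) [Field F] [Fintype F] (hchar : CharP F p)
    (hcard : Fintype.card F = p ^ t) (ht : p = 3 → Even t)
    (u : Matrix.SpecialLinearGroup (Fin 2) F) (hu : orderOf u = p) :
    ∃ (k : ℕ) (g : Matrix.SpecialLinearGroup (Fin 2) F),
      u ^ k ≠ u ∧ g⁻¹ * u * g = u ^ k := by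
  haveI : Fact p.Prime := ⟨hp⟩
  have hp2 : p ≠ 2 := by rintro rfl; exact Nat.not_odd_iff_even.mpr even_two hodd
  -- Step 1: choose k and s with (k : F) = s ^ 2, s ≠ 0, (k : F) ≠ 1
  obtain ⟨k, s, hs0, hks, hk1⟩ :
      ∃ (k : ℕ) (s : F), s ≠ 0 ∧ (k : F) = s ^ 2 ∧ (k : F) ≠ 1 := by
    by_cases h3 : p = 3
    · subst h3
      have hsq : IsSquare (-1 : F) := by
        rw [FiniteField.isSquare_neg_one_iff, hcard]
        obtain ⟨m, rfl⟩ := ht rfl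
        have : (3:ℕ) ^ (m + m) % 4 = 1 := by
          rw [← two_mul, pow_mul, Nat.pow_mod]
          norm_num
        omega
      obtain ⟨s, hs⟩ := hsq
      have h2 : (2 : F) = -1 := by
        have h30 : (3 : F) = 0 := by exact_mod_cast CharP.cast_eq_zero F 3
        linear_combination h30
      refine ⟨2, s, ?_, ?_, ?_⟩
      · rintro rfl
        rw [mul_zero] at hs
        exact one_ne_zero (neg_eq_zero.mp hs)
      · push_cast; rw [h2, hs]; ring
      · push_cast; intro h
        exact one_ne_zero (by linear_combination h : (1:F) = 0)
    · refine ⟨4, 2, ?_, ?_, ?_⟩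
      · intro h
        exact hp2 ((Nat.prime_dvd_prime_iff_eq hp Nat.prime_two).mp
          ((CharP.cast_eq_zero_iff F p 2).mp h))
      · push_cast; ring
      · intro h
        have h30 : (3 : F) = 0 := by push_cast at h ⊢; linear_combination h
        have := (CharP.cast_eq_zero_iff F p 3).mp (by exact_mod_cast h30)
        exact h3 ((Nat.prime_dvd_prime_iff_eq hp Nat.prime_three).mp this)
  -- Step 2: matrix structure
  set A : Matrix (Fin 2) (Fin 2) F := (u : Matrix (Fin 2) (Fin 2) F) with hA
  have hdetA : A.det = 1 := u.2
  have hup : u ^ p = 1 := by rw [← hu]; exact pow_orderOf_eq_one u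
  have hAp : A ^ p = 1 := by
    rw [hA, ← Matrix.SpecialLinearGroup.coe_pow, hup]; rfl
  have hdet1 : (A - 1).det = 0 := by
    have h1 : (A - 1) ^ p = 0 := by
      rw [sub_pow_char_of_commute p (Commute.one_right A), hAp, one_pow, sub_self]
    have h2 := congrArg Matrix.det h1
    rw [Matrix.det_pow] at h2
    have h3 : (0 : Matrix (Fin 2) (Fin 2) F).det = 0 := by simp
    rw [h3] at h2
    exact pow_eq_zero_iff hp.ne_zero |>.mp h2
  have hdet2 : A 0 0 * A 1 1 - A 0 1 * A 1 0 = 1 := by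
    rw [← Matrix.det_fin_two]; exact hdetA
  have htr : A 1 1 = 2 - A 0 0 := by
    have h := hdet1
    simp [Matrix.det_fin_two, Matrix.sub_apply, Matrix.one_fin_two] at h
    linear_combination -h + hdet2
  have hbc : A 0 1 * A 1 0 = -(A 0 0 - 1)^2 := by
    linear_combination -hdet2 + A 0 0 * htr
  have hNN : (A - 1) * (A - 1) = 0 := by
    ext i j
    fin_cases i <;> fin_cases j <;>
      simp [Matrix.mul_apply, Fin.sum_univ_two, Matrix.sub_apply, Matrix.one_fin_two]
    · linear_combination hbc
    · linear_combination (A 0 1) * htr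
    · linear_combination (A 1 0) * htr
    · linear_combination hbc + (A 1 1 - A 0 0) * htr
  have hNA : (A - 1) * A = A - 1 := by
    have h : (A - 1) * A = (A - 1) * (A - 1) + (A - 1) := by noncomm_ring
    rw [h, hNN, zero_add]
  have key : ∀ m : ℕ, A ^ m = 1 + (m : F) • (A - 1) := by
    intro m
    induction m with
    | zero => simp
    | succ n ih =>
      rw [pow_succ, ih, add_mul, one_mul, smul_mul_assoc, hNA]
      push_cast
      rw [add_smul, one_smul]
      abel
  have hu1 : u ≠ 1 := by
    intro h
    rw [h, orderOf_one] at hu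
    exact hp.one_lt.ne hu
  have hN0 : A - 1 ≠ 0 := by
    intro h
    refine hu1 (Subtype.ext ?_)
    rw [Matrix.SpecialLinearGroup.coe_one]
    show A = 1
    rwa [sub_eq_zero] at h
  -- Step 3: construct the conjugating matrix G
  obtain ⟨G, hGdet, hcomm⟩ :
      ∃ G : Matrix (Fin 2) (Fin 2) F, G.det = 1 ∧ A * G = G * (1 + (k : F) • (A - 1)) := by
    by_cases hc : A 1 0 = 0
    · have ha : A 0 0 = 1 := by
        rw [hc, mul_zero] at hbc
        have h1 : (A 0 0 - 1) ^ 2 = 0 := by linear_combination hbc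
        have h2 := pow_eq_zero_iff (two_ne_zero) |>.mp h1
        linear_combination h2
      have hd : A 1 1 = 1 := by rw [htr, ha]; norm_num
      refine ⟨!![s⁻¹, 0; 0, s], ?_, ?_⟩
      · rw [Matrix.det_fin_two_of]; field_simp; norm_num
      · rw [hks]
        ext i j
        fin_cases i <;> fin_cases j <;>
          simp [Matrix.mul_apply, Fin.sum_univ_two, Matrix.add_apply, Matrix.smul_apply,
            Matrix.sub_apply, Matrix.one_fin_two, smul_eq_mul, ha, hd, hc] <;>
          field_simp <;> ring
    · have hb : A 0 1 = -(A 0 0 - 1) ^ 2 * (A 1 0)⁻¹ := by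
        field_simp
        linear_combination hbc
      refine ⟨!![s, (s⁻¹ - s) * (A 0 0 - 1) * (A 1 0)⁻¹; 0, s⁻¹], ?_, ?_⟩
      · rw [Matrix.det_fin_two_of]; field_simp; ring
      · rw [hks]
        ext i j
        fin_cases i <;> fin_cases j <;>
          simp only [Matrix.mul_apply, Fin.sum_univ_two, Matrix.add_apply, Matrix.smul_apply,
            Matrix.sub_apply, Matrix.one_fin_two, smul_eq_mul, Fin.isValue, Fin.mk_zero,
            Fin.mk_one, Matrix.cons_val', Matrix.cons_val_zero, Matrix.cons_val_one,
            Matrix.head_cons, Matrix.head_fin_const, Matrix.empty_val',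
            Matrix.cons_val_fin_one, Matrix.of_apply] <;>
          simp only [htr, hb] <;> field_simp <;> ring
  -- Step 4: conclude
  refine ⟨k, (show Matrix.SpecialLinearGroup (Fin 2) F from ⟨G, hGdet⟩), ?_, ?_⟩
  · intro h
    have h2 : A ^ k = A := by
      have h1 := congrArg
        (fun v : Matrix.SpecialLinearGroup (Fin 2) F => (v : Matrix (Fin 2) (Fin 2) F)) h
      simpa [Matrix.SpecialLinearGroup.coe_pow] using h1
    rw [key k] at h2
    have h4 : (k : F) • (A - 1) = A - 1 := eq_sub_of_add_eq' h2
    have h3 : ((k : F) - 1) • (A - 1) = 0 := by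
      rw [sub_smul, one_smul, h4, sub_self]
    rcases smul_eq_zero.mp h3 with h5 | h5
    · exact hk1 (by linear_combination h5)
    · exact hN0 h5
  · have hmul : u * (show Matrix.SpecialLinearGroup (Fin 2) F from ⟨G, hGdet⟩) = (show Matrix.SpecialLinearGroup (Fin 2) F from ⟨G, hGdet⟩) * u ^ k := by
      apply Subtype.ext
      rw [Matrix.SpecialLinearGroup.coe_mul, Matrix.SpecialLinearGroup.coe_mul,
        Matrix.SpecialLinearGroup.coe_pow, key k]
      exact hcomm
    rw [mul_assoc, hmul, ← mul_assoc, inv_mul_cancel, one_mul]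
end
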